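/- The Schwarzian-Newton method is exact for functions of constant Schwarzian derivative: if {f,x} = 2λ is constant on an interval J containing a zero α of f, with f' ≠ 0 on J, then for every x in a neighborhood of α, g(x) = α, where g(x) = x - arctan(λ, h(x)), h = f/(f' - f''f/(2f')). -/

import Mathlib

/-- The Schwarzian derivative `{f,x} = f'''/f' - (3/2)(f''/f')²`. -/
noncomputable def schwarzian (f : ℝ → ℝ) (x : ℝ) : ℝ :=
  deriv (deriv (deriv f)) x / deriv f x - (3/2) * (deriv (deriv f) x / deriv f x) ^ 2

/-- The inverse hyperbolic tangent. -/
noncomputable def artanh (x : ℝ) : ℝ := (1/2) * Real.log ((1 + x) / (1 - x))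

/-- The generalized arctangent: `arctan(λ,y) = arctan(√λ y)/√λ` for `λ > 0`, `y` for
`λ = 0`, and `arctanh(√(-λ) y)/√(-λ)` for `λ < 0`. -/
noncomputable def arctanGen (lam y : ℝ) : ℝ :=
  if 0 < lam then Real.arctan (Real.sqrt lam * y) / Real.sqrt lam
  else if lam < 0 then artanh (Real.sqrt (-lam) * y) / Real.sqrt (-lam)
  else y

lemma artanh_hasDerivAt {y : ℝ} (hy : y ^ 2 < 1) :
    HasDerivAt artanh (1 / (1 - y ^ 2)) y := by
  have h1 : 1 - y ≠ 0 := by nlinarith [sq_nonneg y]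
  have h1' : 1 + y ≠ 0 := by nlinarith [sq_nonneg y]
  have h2 : 0 < (1 + y) / (1 - y) := by
    apply div_pos <;> nlinarith [sq_nonneg y]
  have Ha : HasDerivAt (fun x : ℝ => 1 + x) 1 y := by
    simpa using (hasDerivAt_id y).const_add (1 : ℝ)
  have Hb : HasDerivAt (fun x : ℝ => 1 - x) (-1) y := by
    simpa using (hasDerivAt_id y).const_sub (1 : ℝ)
  have H : HasDerivAt (fun x : ℝ => (1 + x) / (1 - x))
      ((1 * (1 - y) - (1 + y) * (-1)) / (1 - y) ^ 2) y := Ha.div Hb h1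
  have H2 := (H.log (ne_of_gt h2)).const_mul (1/2 : ℝ)
  refine H2.congr_deriv ?_
  have h3 : 1 - y ^ 2 ≠ 0 := by nlinarith [sq_nonneg y]
  field_simp
  ring

lemma arctanGen_zero (lam : ℝ) : arctanGen lam 0 = 0 := by
  unfold arctanGen artanh
  split_ifs <;> simp

lemma arctanGen_hasDerivAt (lam : ℝ) {y : ℝ} (hy : 0 < 1 + lam * y ^ 2) :
    HasDerivAt (arctanGen lam) (1 / (1 + lam * y ^ 2)) y := by
  rcases lt_trichotomy lam 0 with hlam | hlam | hlam
  · have hfun : arctanGen lam = fun y => artanh (Real.sqrt (-lam) * y) / Real.sqrt (-lam) := by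
      funext z; simp [arctanGen, not_lt.mpr hlam.le, hlam]
    rw [hfun]
    set s := Real.sqrt (-lam) with hs
    have hs2 : s ^ 2 = -lam := Real.sq_sqrt (by linarith)
    have hs0 : s ≠ 0 := by
      intro h0; rw [h0] at hs2; nlinarith
    have hlt : (s * y) ^ 2 < 1 := by rw [mul_pow, hs2]; nlinarith
    have H := ((artanh_hasDerivAt hlt).comp y ((hasDerivAt_id y).const_mul s)).div_const s
    refine H.congr_deriv ?_
    rw [mul_pow, hs2]
    field_simp
    rw [sub_neg_eq_add]; exact div_self hy.ne'
  · have hfun : arctanGen lam = fun y => y := by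
      funext z; simp [arctanGen, hlam]
    rw [hfun, hlam]
    exact (hasDerivAt_id' y).congr_deriv (by norm_num)
  · have hfun : arctanGen lam = fun y => Real.arctan (Real.sqrt lam * y) / Real.sqrt lam := by
      funext z; simp [arctanGen, hlam]
    rw [hfun]
    set s := Real.sqrt lam with hs
    have hs2 : s ^ 2 = lam := Real.sq_sqrt hlam.le
    have hs0 : s ≠ 0 := by
      intro h0; rw [h0] at hs2; nlinarith
    have H := ((Real.hasDerivAt_arctan (s * y)).comp y ((hasDerivAt_id y).const_mul s)).div_const s
    refine H.congr_deriv ?_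
    rw [mul_pow, hs2]
    field_simp

/-- The Schwarzian-Newton method is exact for functions of constant Schwarzian
derivative: if `{f,x} = 2λ` on an open interval `J` containing a zero `α` of `f`, with
`f' ≠ 0` on `J` and `f` sufficiently smooth, then `g(x) = α` for every `x` in a
neighborhood of `α`, where `g(x) = x - arctan(λ, h(x))`, `h = f/(f' - f''f/(2f'))`. -/
theorem stmt9 (f : ℝ → ℝ) (J : Set ℝ) (hJ : IsOpen J) (hJc : Convex ℝ J)
    (hf : ∀ x ∈ J, ContDiffAt ℝ 3 f x)
    (hf' : ∀ x ∈ J, deriv f x ≠ 0)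
    (lam : ℝ) (hS : ∀ x ∈ J, schwarzian f x = 2 * lam)
    (α : ℝ) (hα : α ∈ J) (hfα : f α = 0)
    (h g : ℝ → ℝ)
    (hh : ∀ x, h x = f x / (deriv f x - deriv (deriv f) x * f x / (2 * deriv f x)))
    (hg : ∀ x, g x = x - arctanGen lam (h x)) :
    ∃ U ∈ nhds α, ∀ x ∈ U, g x = α := by
  have hCD : ContDiffOn ℝ 3 f J := fun x hx => (hf x hx).contDiffWithinAt
  have hCD1 : ContDiffOn ℝ 2 (deriv f) J := hCD.deriv_of_isOpen hJ (by norm_num)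
  have hCD2 : ContDiffOn ℝ 1 (deriv (deriv f)) J := hCD1.deriv_of_isOpen hJ (by norm_num)
  have hfd : ∀ x ∈ J, HasDerivAt f (deriv f x) x := fun x hx =>
    ((hf x hx).differentiableAt (by norm_num)).hasDerivAt
  have hf1d : ∀ x ∈ J, HasDerivAt (deriv f) (deriv (deriv f) x) x := fun x hx =>
    ((hCD1.contDiffAt (hJ.mem_nhds hx)).differentiableAt (by norm_num)).hasDerivAt
  have hf2d : ∀ x ∈ J, HasDerivAt (deriv (deriv f)) (deriv (deriv (deriv f)) x) x := fun x hx =>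
    ((hCD2.contDiffAt (hJ.mem_nhds hx)).differentiableAt (by norm_num)).hasDerivAt
  have hfc : ContinuousAt f α := (hf α hα).continuousAt
  have hf1c : ContinuousAt (deriv f) α := (hCD1.contDiffAt (hJ.mem_nhds hα)).continuousAt
  have hf2c : ContinuousAt (deriv (deriv f)) α := (hCD2.contDiffAt (hJ.mem_nhds hα)).continuousAt
  have hfα' := hf' α hα
  have hDα : deriv f α - deriv (deriv f) α * f α / (2 * deriv f α) = deriv f α := by
    rw [hfα]; ring
  have hDc : ContinuousAt (fun x => deriv f x - deriv (deriv f) x * f x / (2 * deriv f x)) α :=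
    hf1c.sub ((hf2c.mul hfc).div (continuousAt_const.mul hf1c)
      (mul_ne_zero two_ne_zero hfα'))
  have heq : h = fun x => f x / (deriv f x - deriv (deriv f) x * f x / (2 * deriv f x)) :=
    funext hh
  have hhc : ContinuousAt h α := by
    rw [heq]
    exact hfc.div hDc (by rw [hDα]; exact hfα')
  have hhα : h α = 0 := by rw [hh, hfα]; simp
  have hU1 : {x | deriv f x - deriv (deriv f) x * f x / (2 * deriv f x) ≠ 0} ∈ nhds α :=
    hDc.eventually_ne (by rw [hDα]; exact hfα')
  have hU2 : {x | (0:ℝ) < 1 + lam * h x ^ 2} ∈ nhds α := by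
    have hc : ContinuousAt (fun x => 1 + lam * h x ^ 2) α :=
      continuousAt_const.add (continuousAt_const.mul (hhc.pow 2))
    have h1 : (0:ℝ) < 1 + lam * h α ^ 2 := by rw [hhα]; norm_num
    exact hc.preimage_mem_nhds (Ioi_mem_nhds h1)
  obtain ⟨ε, hε, hball⟩ :=
    Metric.mem_nhds_iff.mp (Filter.inter_mem (Filter.inter_mem (hJ.mem_nhds hα) hU1) hU2)
  have hgderiv : ∀ x ∈ Metric.ball α ε, HasDerivWithinAt g ((fun _ => (0:ℝ)) x)
      (Metric.ball α ε) x := by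
    intro x hx
    obtain ⟨⟨hxJ, hxD⟩, hxP⟩ := hball hx
    have hxD : deriv f x - deriv (deriv f) x * f x / (2 * deriv f x) ≠ 0 := hxD
    have hxP : (0:ℝ) < 1 + lam * h x ^ 2 := hxP
    have hb := hf' x hxJ
    have hb2 : (2:ℝ) * deriv f x ≠ 0 := mul_ne_zero two_ne_zero hb
    have HD := (hf1d x hxJ).sub
      (((hf2d x hxJ).mul (hfd x hxJ)).div ((hf1d x hxJ).const_mul 2) hb2)
    have Hh0 := (hfd x hxJ).div HD hxD
    rw [show (f / (deriv f - deriv (deriv f) * f / fun y => 2 * deriv f y)) = h from heq.symm] at Hh0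
    simp only [Pi.sub_apply, Pi.mul_apply, Pi.div_apply] at Hh0
    have hD2 : 2 * deriv f x ^ 2 - deriv (deriv f) x * f x ≠ 0 := by
      intro h0
      apply hxD
      field_simp
      nlinarith [h0]
    have hrel : deriv (deriv (deriv f)) x * deriv f x
        = 2 * lam * deriv f x ^ 2 + 3/2 * deriv (deriv f) x ^ 2 := by
      have hs := hS x hxJ
      unfold schwarzian at hs
      field_simp at hs
      have h2 : deriv f x * (deriv (deriv (deriv f)) x * deriv f x
          - (2 * lam * deriv f x ^ 2 + 3/2 * deriv (deriv f) x ^ 2)) = 0 := by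
        linear_combination deriv f x * hs / 2
      have h3 := (mul_eq_zero.mp h2).resolve_left hb
      linarith [h3]
    have hd3 : deriv (deriv (deriv f)) x
        = (2 * lam * deriv f x ^ 2 + 3/2 * deriv (deriv f) x ^ 2) / deriv f x := by
      rw [eq_div_iff hb]; exact hrel
    have Hh : HasDerivAt h (1 + lam * h x ^ 2) x := by
      refine Hh0.congr_deriv ?_
      rw [hh x, hd3]
      have e1 : deriv f x - deriv (deriv f) x * f x / (2 * deriv f x)
          = (2 * deriv f x ^ 2 - deriv (deriv f) x * f x) / (2 * deriv f x) := by
        field_simp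
      rw [e1]
      field_simp [hb, hD2]
      have hD3 : deriv f x ^ 2 * 2 - deriv (deriv f) x * f x ≠ 0 := by rw [mul_comm]; exact hD2
      field_simp
      ring
    have hP : (1:ℝ) + lam * h x ^ 2 ≠ 0 := ne_of_gt hxP
    have HG : HasDerivAt g 0 x := by
      have H1 := (arctanGen_hasDerivAt lam hxP).comp x Hh
      have H2 := (hasDerivAt_id x).sub H1
      rw [funext hg]
      refine H2.congr_deriv ?_
      rw [one_div, inv_mul_cancel₀ hP]
      norm_num
    exact HG.hasDerivWithinAt
  refine ⟨Metric.ball α ε, Metric.ball_mem_nhds α hε, fun x hx => ?_⟩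
  have hαB : α ∈ Metric.ball α ε := Metric.mem_ball_self hε
  have key := Convex.norm_image_sub_le_of_norm_hasDerivWithin_le (C := 0)
    hgderiv (fun y _ => by simp) (convex_ball α ε) hαB hx
  rw [zero_mul] at key
  have hgx : g x = g α := by
    have := norm_le_zero_iff.mp key
    rwa [sub_eq_zero] at this
  rw [hgx, hg, hhα, arctanGen_zero, sub_zero]
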